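/- Let p be an odd prime and G = V ⋊ ⟨c⟩ the quotient of C₂ ≀ C_p by its center. In G, the element c is conjugate to wc for every w ∈ V; consequently the p−1 conjugacy classes of G outside V are permuted transitively by automorphisms of G extending the automorphisms of ⟨c⟩. -/

import Mathlib

/-- The base group of the wreath product `C₂ ≀ C_p`, written multiplicatively. -/
abbrev WreathBase (p : ℕ) := Multiplicative (ZMod p → ZMod 2)

/-- The shift automorphism of the base group, by `k`. -/
def shiftAddAut (p : ℕ) (k : ZMod p) : AddAut (ZMod p → ZMod 2) where
  toFun f i := f (i + k)
  invFun f i := f (i - k)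
  left_inv f := by funext i; simp
  right_inv f := by funext i; simp
  map_add' f g := rfl

/-- The action of `C_p` on the base group by cyclic shifts. -/
def wreathShift (p : ℕ) : Multiplicative (ZMod p) →* MulAut (WreathBase p) where
  toFun k := AddEquiv.toMultiplicative (shiftAddAut p k.toAdd)
  map_one' := by
    ext f
    simp [shiftAddAut, AddEquiv.toMultiplicative]
  map_mul' a b := by
    ext f
    simp only [shiftAddAut, AddEquiv.toMultiplicative]
    first
      | exact congrArg _ (add_assoc ..).symm
      | simp [add_assoc]
      | (simp only [MulAut.mul_apply]; exact congrArg _ (add_assoc ..).symm)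

/-- The wreath product `C₂ ≀ C_p`. -/
abbrev Wreath (p : ℕ) := WreathBase p ⋊[wreathShift p] Multiplicative (ZMod p)

/-- The quotient `G = W / Z(W)` of the wreath product by its center. -/
abbrev WreathQuot (p : ℕ) := Wreath p ⧸ Subgroup.center (Wreath p)

/-- The canonical generator `c`, the image in `G` of the generator of `C_p`. -/
def cElem (p : ℕ) : WreathQuot p :=
  QuotientGroup.mk' _ (SemidirectProduct.inr (Multiplicative.ofAdd (1 : ZMod p)))

/-- `V`, the image in `G` of the base group `C₂^p`. -/
def Vsub (p : ℕ) : Subgroup (WreathQuot p) :=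
  Subgroup.map (QuotientGroup.mk' _) (SemidirectProduct.inl (φ := wreathShift p)).range

lemma zmod2_add_self (x : ZMod 2) : x + x = 0 := by revert x; decide

lemma solveA' (p : ℕ) [Fact p.Prime] (k : ZMod p) (hk : k ≠ 0)
    (g : ZMod p → ZMod 2) (hg : ∑ i, g i = 0) :
    ∃ e : ZMod p → ZMod 2, ∀ i, g i = e i + e (i + k) := by
  haveI : NeZero p := ⟨(Fact.out : p.Prime).ne_zero⟩
  refine ⟨fun i => ∑ m ∈ Finset.range ((i * k⁻¹).val), g ((m : ZMod p) * k), fun i => ?_⟩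
  show g i = (∑ m ∈ Finset.range ((i * k⁻¹).val), g ((m : ZMod p) * k))
      + ∑ m ∈ Finset.range (((i + k) * k⁻¹).val), g ((m : ZMod p) * k)
  have hsum : ∑ m ∈ Finset.range p, g ((m : ZMod p) * k) = 0 := by
    rw [← hg]
    refine Finset.sum_nbij' (fun m => (m : ZMod p) * k) (fun x => (x * k⁻¹).val)
      (fun a _ => Finset.mem_univ _) (fun x _ => Finset.mem_range.mpr (ZMod.val_lt _))
      ?_ ?_ (fun a _ => rfl)
    · intro a ha
      rw [Finset.mem_range] at ha
      show (((a : ZMod p) * k) * k⁻¹).val = a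
      rw [mul_inv_cancel_right₀ hk, ZMod.val_cast_of_lt ha]
    · intro x _
      show (((x * k⁻¹).val : ℕ) : ZMod p) * k = x
      rw [ZMod.natCast_val, ZMod.cast_id, inv_mul_cancel_right₀ hk]
  have hval : (((i * k⁻¹).val : ℕ) : ZMod p) = i * k⁻¹ := by
    rw [ZMod.natCast_val, ZMod.cast_id]
  set j := (i * k⁻¹).val with hj
  have hik : ((j : ℕ) : ZMod p) * k = i := by rw [hval, inv_mul_cancel_right₀ hk]
  have hjlt : j < p := ZMod.val_lt _
  have hkey : ((i + k) * k⁻¹).val = (((j : ℕ) : ZMod p) + 1).val := by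
    rw [add_mul, mul_inv_cancel₀ hk, hval]
  have hcast : (((j : ℕ) : ZMod p) + 1) = (((j + 1 : ℕ)) : ZMod p) := by push_cast; ring
  rcases eq_or_lt_of_le (Nat.succ_le_of_lt hjlt) with hcase | hcase
  · -- j + 1 = p
    have hp' : p = j + 1 := hcase.symm
    have h0 : (((j : ℕ) : ZMod p) + 1) = 0 := by
      rw [hcast, ← hp', ZMod.natCast_self]
    have hek : (∑ m ∈ Finset.range (((i+k) * k⁻¹).val), g ((m : ZMod p) * k)) = 0 := by
      rw [hkey, h0, ZMod.val_zero, Finset.range_zero, Finset.sum_empty]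
    have hrange : Finset.range p = Finset.range (j + 1) := by rw [hp']
    rw [hrange, Finset.sum_range_succ, hik] at hsum
    rw [hek, add_zero]
    linear_combination hsum - zmod2_add_self (∑ m ∈ Finset.range j, g ((m : ZMod p) * k))
  · -- j + 1 < p
    have hval1 : ((((j : ℕ) : ZMod p) + 1)).val = j + 1 := by
      rw [hcast, ZMod.val_cast_of_lt hcase]
    have hek : (∑ m ∈ Finset.range (((i+k) * k⁻¹).val), g ((m : ZMod p) * k))
        = (∑ m ∈ Finset.range j, g ((m : ZMod p) * k)) + g i := by
      rw [hkey, hval1, Finset.sum_range_succ, hik]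
    rw [hek]
    linear_combination - zmod2_add_self (∑ m ∈ Finset.range j, g ((m : ZMod p) * k))

lemma solveA (p : ℕ) [Fact p.Prime] (hodd : Odd p) (k : ZMod p) (hk : k ≠ 0)
    (g : ZMod p → ZMod 2) :
    ∃ (e : ZMod p → ZMod 2) (a : ZMod 2), ∀ i, g i = e i + e (i + k) + a := by
  haveI : NeZero p := ⟨(Fact.out : p.Prime).ne_zero⟩
  set a := ∑ i, g i with ha
  have hp2 : (p : ZMod 2) = 1 := by
    rw [← ZMod.natCast_mod, Nat.odd_iff.mp hodd, Nat.cast_one]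
  obtain ⟨e, he⟩ := solveA' p k hk (fun i => g i + a) (by
    rw [Finset.sum_add_distrib, Finset.sum_const, Finset.card_univ, ZMod.card,
      nsmul_eq_mul, hp2, one_mul, ← ha]
    exact zmod2_add_self a)
  refine ⟨e, a, fun i => ?_⟩
  linear_combination he i - zmod2_add_self a

open SemidirectProduct Multiplicative

@[simp] lemma shift_toAdd (p : ℕ) (k : Multiplicative (ZMod p)) (f : WreathBase p) (i : ZMod p) :
    ((wreathShift p k) f).toAdd i = f.toAdd (i + k.toAdd) := rfl

/-- constant elements of the base, inside the wreath product -/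
def constElem (p : ℕ) (a : ZMod 2) : Wreath p :=
  SemidirectProduct.inl (Multiplicative.ofAdd fun _ => a)

lemma const_mem_center (p : ℕ) (a : ZMod 2) : constElem p a ∈ Subgroup.center (Wreath p) := by
  refine Subgroup.mem_center_iff.mpr fun g => ?_
  refine SemidirectProduct.ext ?_ (by simp [constElem])
  have hshift : (wreathShift p g.right) (Multiplicative.ofAdd fun _ => a)
      = Multiplicative.ofAdd (fun _ => a) := rfl
  simp [constElem, hshift, mul_comm]

lemma center_right (p : ℕ) (z : Wreath p) (hz : z ∈ Subgroup.center (Wreath p)) :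
    z.right = 1 := by
  by_contra h
  have hk : z.right.toAdd ≠ 0 := fun h0 => h (by
    have : z.right = Multiplicative.ofAdd 0 := by rw [← h0, ofAdd_toAdd]
    simpa using this)
  set k := z.right.toAdd with hkdef
  have hcomm := Subgroup.mem_center_iff.mp hz
    (inl (Multiplicative.ofAdd (Pi.single (0 : ZMod p) (1 : ZMod 2))))
  have hleft := congrArg SemidirectProduct.left hcomm
  simp only [mul_left, right_inl, map_one, MulAut.one_apply, left_inl] at hleft
  -- hleft : ofAdd single * z.left = z.left * φ z.right (ofAdd single)
  have h2 : (wreathShift p z.right) (Multiplicative.ofAdd (Pi.single (0 : ZMod p) (1 : ZMod 2)))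
      = Multiplicative.ofAdd (Pi.single (0 : ZMod p) (1 : ZMod 2)) := by
    have := hleft
    rw [mul_comm] at this
    exact (mul_left_cancel this).symm
  have h3 := congrArg (fun w : WreathBase p => w.toAdd (-k)) h2
  simp only [shift_toAdd, toAdd_ofAdd, neg_add_cancel] at h3
  rw [← hkdef, neg_add_cancel] at h3
  rw [Pi.single_eq_same, Pi.single_eq_of_ne (by simpa using hk)] at h3
  exact one_ne_zero h3

lemma mk_const_eq_one (p : ℕ) (a : ZMod 2) :
    (QuotientGroup.mk (constElem p a) : WreathQuot p) = 1 :=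
  (QuotientGroup.eq_one_iff _).mpr (const_mem_center p a)

lemma mem_Vsub_iff (p : ℕ) (x : Wreath p) :
    (QuotientGroup.mk x : WreathQuot p) ∈ Vsub p ↔ x.right = 1 := by
  constructor
  · rintro hx
    obtain ⟨w, hw, hmk⟩ := Subgroup.mem_map.mp hx
    obtain ⟨f, rfl⟩ := MonoidHom.mem_range.mp hw
    rw [QuotientGroup.mk'_apply] at hmk
    have := QuotientGroup.eq.mp hmk
    have hr := center_right p _ this
    simpa using hr
  · intro hx
    refine Subgroup.mem_map.mpr ⟨inl x.left, MonoidHom.mem_range.mpr ⟨x.left, rfl⟩, ?_⟩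
    rw [QuotientGroup.mk'_apply]
    congr 1
    exact SemidirectProduct.ext rfl hx.symm

lemma conj_of_right_eq (p : ℕ) [Fact p.Prime] (hodd : Odd p) (x y : Wreath p)
    (hxy : x.right = y.right) (hne : x.right ≠ 1) :
    IsConj (QuotientGroup.mk x : WreathQuot p) (QuotientGroup.mk y) := by
  set k := x.right.toAdd with hkdef
  have hk : k ≠ 0 := fun h0 => hne (by
    have : x.right = Multiplicative.ofAdd 0 := by rw [← h0, hkdef, ofAdd_toAdd]
    simpa using this)
  obtain ⟨e, a, he⟩ := solveA p hodd k hk (fun i => x.left.toAdd i + y.left.toAdd i)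
  set u : Wreath p := inl (Multiplicative.ofAdd e) with hu
  have hclaim : u * x * u⁻¹ = constElem p a * y := by
    refine SemidirectProduct.ext ?_ ?_
    · apply Multiplicative.toAdd.injective
      funext i
      simp only [hu, constElem, mul_left, mul_right, inv_left, inv_right, left_inl, right_inl,
        map_one, MulAut.one_apply, one_mul, mul_one, inv_one, map_inv,
        toAdd_mul, toAdd_inv, toAdd_ofAdd, Pi.add_apply, Pi.neg_apply, shift_toAdd]
      have h2 := he i
      beta_reduce at h2
      linear_combination h2 + zmod2_add_self (e i) - zmod2_add_self (y.left.toAdd i)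
    · simp [hu, constElem, hxy]
  have : (QuotientGroup.mk u : WreathQuot p) * QuotientGroup.mk x * (QuotientGroup.mk u)⁻¹
      = QuotientGroup.mk y := by
    rw [← QuotientGroup.mk_inv, ← QuotientGroup.mk_mul, ← QuotientGroup.mk_mul, hclaim,
      QuotientGroup.mk_mul, mk_const_eq_one, one_mul]
  exact isConj_iff.mpr ⟨QuotientGroup.mk u, this⟩

def wreathAut (p : ℕ) [Fact p.Prime] (u : ZMod p) (hu : u ≠ 0) : Wreath p ≃* Wreath p where
  toFun x := ⟨Multiplicative.ofAdd (fun i => x.left.toAdd (u⁻¹ * i)),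
    Multiplicative.ofAdd (u * x.right.toAdd)⟩
  invFun x := ⟨Multiplicative.ofAdd (fun i => x.left.toAdd (u * i)),
    Multiplicative.ofAdd (u⁻¹ * x.right.toAdd)⟩
  left_inv x := by
    refine SemidirectProduct.ext ?_ ?_
    · apply Multiplicative.toAdd.injective
      funext i
      simp only [toAdd_ofAdd]
      rw [← mul_assoc, inv_mul_cancel₀ hu, one_mul]
    · apply Multiplicative.toAdd.injective
      simp only [toAdd_ofAdd]
      rw [← mul_assoc, inv_mul_cancel₀ hu, one_mul]
  right_inv x := by
    refine SemidirectProduct.ext ?_ ?_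
    · apply Multiplicative.toAdd.injective
      funext i
      simp only [toAdd_ofAdd]
      rw [← mul_assoc, mul_inv_cancel₀ hu, one_mul]
    · apply Multiplicative.toAdd.injective
      simp only [toAdd_ofAdd]
      rw [← mul_assoc, mul_inv_cancel₀ hu, one_mul]
  map_mul' x y := by
    refine SemidirectProduct.ext ?_ ?_
    · apply Multiplicative.toAdd.injective
      funext i
      simp only [mul_left, mul_right, toAdd_ofAdd, toAdd_mul, Pi.add_apply, shift_toAdd]
      rw [mul_add, ← mul_assoc, inv_mul_cancel₀ hu, one_mul]
    · apply Multiplicative.toAdd.injective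
      simp only [mul_right, toAdd_ofAdd, toAdd_mul]
      ring

lemma center_map_eq {G : Type*} [Group G] (e : G ≃* G) :
    (Subgroup.center G).map e.toMonoidHom = Subgroup.center G := by
  have key : ∀ (f : G ≃* G), ∀ z ∈ Subgroup.center G, f z ∈ Subgroup.center G := by
    intro f z hz
    refine Subgroup.mem_center_iff.mpr fun g => ?_
    have hzz := Subgroup.mem_center_iff.mp hz (f.symm g)
    calc g * f z = f (f.symm g) * f z := by rw [f.apply_symm_apply]
    _ = f (f.symm g * z) := by rw [map_mul]
    _ = f (z * f.symm g) := by rw [hzz]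
    _ = f z * g := by rw [map_mul, f.apply_symm_apply]
  refine le_antisymm ?_ ?_
  · rintro x ⟨z, hz, rfl⟩
    exact key e z hz
  · intro x hx
    exact ⟨e.symm x, key e.symm x hx, e.apply_symm_apply x⟩

def quotAut (p : ℕ) [Fact p.Prime] (e : Wreath p ≃* Wreath p) : MulAut (WreathQuot p) :=
  QuotientGroup.congr _ _ e (center_map_eq e)

lemma quotAut_mk (p : ℕ) [Fact p.Prime] (e : Wreath p ≃* Wreath p) (x : Wreath p) :
    quotAut p e (QuotientGroup.mk x) = QuotientGroup.mk (e x) :=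
  QuotientGroup.congr_mk _ _ _ _ x


/-- For an odd prime `p` and `G = (C₂ ≀ C_p)/Z = V ⋊ ⟨c⟩`: the element `c`
is conjugate to `w·c` for every `w ∈ V`; consequently any two elements
outside `V` are related by an automorphism of `G` followed by a conjugation,
i.e. the `p - 1` conjugacy classes outside `V` are permuted transitively by
automorphisms of `G`. -/
theorem conjugacy_outside_V (p : ℕ) (hp : p.Prime) (hodd : Odd p) :
    (∀ w ∈ Vsub p, IsConj (cElem p) (w * cElem p)) ∧
    (∀ g ∉ Vsub p, ∀ h ∉ Vsub p,
      ∃ α : MulAut (WreathQuot p), IsConj (α g) h) := by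
  haveI : Fact p.Prime := ⟨hp⟩
  have hone : (SemidirectProduct.inr (Multiplicative.ofAdd (1 : ZMod p))
      : Wreath p).right ≠ 1 := by
    simp only [right_inr]
    intro hcon
    have : (1 : ZMod p) = 0 := by
      have := congrArg Multiplicative.toAdd hcon
      simpa using this
    exact one_ne_zero this
  constructor
  · intro w hw
    obtain ⟨v, hv, hmk⟩ := Subgroup.mem_map.mp hw
    obtain ⟨f, rfl⟩ := MonoidHom.mem_range.mp hv
    rw [QuotientGroup.mk'_apply] at hmk
    have hcw : w * cElem p = QuotientGroup.mk
        (inl f * SemidirectProduct.inr (Multiplicative.ofAdd (1 : ZMod p))) := by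
      rw [← hmk]
      rfl
    rw [hcw]
    show IsConj (QuotientGroup.mk _) _
    exact conj_of_right_eq p hodd _ _ (by simp) hone
  · intro g hg h hh
    obtain ⟨x, rfl⟩ := QuotientGroup.mk_surjective g
    obtain ⟨y, rfl⟩ := QuotientGroup.mk_surjective h
    rw [mem_Vsub_iff] at hg hh
    have hk : x.right.toAdd ≠ 0 := fun h0 => hg (by
      have : x.right = Multiplicative.ofAdd 0 := by rw [← h0, ofAdd_toAdd]
      simpa using this)
    have hl : y.right.toAdd ≠ 0 := fun h0 => hh (by
      have : y.right = Multiplicative.ofAdd 0 := by rw [← h0, ofAdd_toAdd]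
      simpa using this)
    set k := x.right.toAdd
    set l := y.right.toAdd
    have hu : l * k⁻¹ ≠ 0 := mul_ne_zero hl (inv_ne_zero hk)
    refine ⟨quotAut p (wreathAut p (l * k⁻¹) hu), ?_⟩
    rw [quotAut_mk]
    refine conj_of_right_eq p hodd _ _ ?_ ?_
    · show Multiplicative.ofAdd (l * k⁻¹ * k) = y.right
      rw [inv_mul_cancel_right₀ hk, ofAdd_toAdd]
    · show Multiplicative.ofAdd (l * k⁻¹ * k) ≠ 1
      rw [inv_mul_cancel_right₀ hk]
      intro hcon
      exact hl (by simpa using congrArg Multiplicative.toAdd hcon)
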